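/- Let L ≥ 2, let k = (k_1,…,k_L) with all k_ℓ ≥ 1 and s = (s_1,…,s_L) with all s_ℓ ≥ 1, and let k := k_1 + Σ_{ℓ=2}^L (k_ℓ−1)S_ℓ where S_ℓ := s_1⋯s_{ℓ−1}. Set k′ := (k_1 + s_1(k_2−1), k_3, …, k_L) and s′ := (s_1·s_2, s_3, …, s_L). Then F(k,s) equals the set of all Q ∈ F(k′,s′) for which there exists a homogeneous polynomial D ∈ ℂ[x,y] of degree ≥ k − k_1, all of whose monomials involve only x^{s_1} and y^{s_1}, such that D divides every component of σ_{s_1}(Q). -/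

import Mathlib

/-- All monomials of `P` involve only `x^s` and `y^s`. -/
def MonoS (s : ℕ) (P : MvPolynomial (Fin 2) ℂ) : Prop :=
  ∀ m ∈ P.support, s ∣ m 0 ∧ s ∣ m 1

/-- `S ℓ = s_1 ⋯ s_{ℓ-1}` (0-indexed: `Sp s i = ∏_{j<i} s j`, so `Sp s 0 = 1`). -/
def Sp (s : ℕ → ℕ) (i : ℕ) : ℕ := ∏ j ∈ Finset.range i, s j

/-- `F(k,s)`: homogeneous polynomials of degree `k-1` admitting a factorization
`P = P_L ⋯ P_1`, where `P_ℓ` is homogeneous of degree `S_ℓ(k_ℓ-1)` with all monomials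
in `x^{S_ℓ}, y^{S_ℓ}` (layers are 0-indexed here). -/
def Fset (L : ℕ) (k s : ℕ → ℕ) : Set (MvPolynomial (Fin 2) ℂ) :=
  { P | ∃ Q : ℕ → MvPolynomial (Fin 2) ℂ, P = ∏ i ∈ Finset.range L, Q i ∧
      ∀ i < L, (Q i).IsHomogeneous (Sp s i * (k i - 1)) ∧ MonoS (Sp s i) (Q i) }

/-- `p` is the `s`-decomposition `σ_s(P)` of the homogeneous polynomial `P` of degree `m`. -/
def IsSigma (s m : ℕ) (P : MvPolynomial (Fin 2) ℂ)
    (p : Fin s → MvPolynomial (Fin 2) ℂ) : Prop :=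
  (∀ i : Fin s, (p i).IsHomogeneous (s * ((m - i.val) / s)) ∧ MonoS s (p i) ∧
      (m < i.val → p i = 0)) ∧
  P = ∑ i : Fin s,
    MvPolynomial.X 0 ^ i.val * MvPolynomial.X 1 ^ ((m - i.val) % s) * p i


open MvPolynomial

abbrev R2 := MvPolynomial (Fin 2) ℂ

lemma degree_fin2 (m : Fin 2 →₀ ℕ) : Finsupp.degree m = m 0 + m 1 := by
  have : Finsupp.degree m = ∑ i : Fin 2, m i :=
    Finset.sum_subset (Finset.subset_univ _) (by
      intro x _ hx; exact Finsupp.notMem_support_iff.mp hx)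
  rw [this, Fin.sum_univ_two]

lemma isHomog_iff {P : R2} {n : ℕ} :
    P.IsHomogeneous n ↔ ∀ m ∈ P.support, m 0 + m 1 = n := by
  constructor
  · intro h m hm
    rw [← degree_fin2, Finsupp.degree_eq_weight_one]
    exact h (mem_support_iff.mp hm)
  · intro h d hd
    have := h d (mem_support_iff.mpr hd)
    rw [← degree_fin2, Finsupp.degree_eq_weight_one] at this
    exact this

lemma MonoS.mul {s : ℕ} {P Q : R2} (hP : MonoS s P) (hQ : MonoS s Q) : MonoS s (P * Q) := by
  intro m hm
  classical
  obtain ⟨a, ha, b, hb, rfl⟩ := Finset.mem_add.mp (MvPolynomial.support_mul P Q hm)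
  obtain ⟨h1, h2⟩ := hP a ha; obtain ⟨h3, h4⟩ := hQ b hb
  exact ⟨by simpa using Nat.dvd_add h1 h3, by simpa using Nat.dvd_add h2 h4⟩

lemma MonoS.sub {s : ℕ} {P Q : R2} (hP : MonoS s P) (hQ : MonoS s Q) : MonoS s (P - Q) := by
  intro m hm
  have : m ∈ P.support ∪ Q.support := by
    by_contra h
    simp only [Finset.mem_union, not_or, MvPolynomial.notMem_support_iff] at h
    exact (MvPolynomial.mem_support_iff.mp hm) (by rw [MvPolynomial.coeff_sub, h.1, h.2, sub_zero])
  rcases Finset.mem_union.mp this with h | h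
  · exact hP m h
  · exact hQ m h

lemma MonoS.of_dvd {s t : ℕ} {P : R2} (h : MonoS s P) (hts : t ∣ s) : MonoS t P :=
  fun m hm => ⟨hts.trans (h m hm).1, hts.trans (h m hm).2⟩

lemma MonoS.zero (s : ℕ) : MonoS s 0 := by intro m hm; simp at hm

lemma MonoS.one (P : R2) : MonoS 1 P := fun _ _ => ⟨one_dvd _, one_dvd _⟩

noncomputable def degm (m : Fin 2 →₀ ℕ) : ℕ := m 0 + m 1

lemma support_homogeneousComponent_subset (n : ℕ) (P : R2) :
    (homogeneousComponent n P).support ⊆ P.support := by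
  intro m hm
  rw [mem_support_iff, coeff_homogeneousComponent] at hm
  rw [mem_support_iff]
  by_cases h : Finsupp.degree m = n
  · rwa [if_pos h] at hm
  · rw [if_neg h] at hm; exact absurd rfl hm

lemma hc_mul_top {B C : R2} {nB nC : ℕ}
    (H : ∀ a ∈ B.support, ∀ b ∈ C.support, degm a + degm b = nB + nC → degm a = nB) :
    homogeneousComponent (nB + nC) (B * C)
      = homogeneousComponent nB B * homogeneousComponent nC C := by
  classical
  set hcB := homogeneousComponent nB B with hhcB
  set hcC := homogeneousComponent nC C with hhcC
  have hBdeg : ∀ a ∈ hcB.support, degm a = nB := fun a ha =>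
    isHomog_iff.mp (homogeneousComponent_isHomogeneous nB B) a ha
  have hCdeg : ∀ b ∈ hcC.support, degm b = nC := fun b hb =>
    isHomog_iff.mp (homogeneousComponent_isHomogeneous nC C) b hb
  have hsplit : B * C = hcB * hcC + (hcB * (C - hcC) + (B - hcB) * C) := by ring
  have addm : ∀ a b : Fin 2 →₀ ℕ, degm (a + b) = degm a + degm b := by
    intro a b; simp [degm]; ring
  have hz : homogeneousComponent (nB + nC) (hcB * (C - hcC) + (B - hcB) * C) = 0 := by
    apply homogeneousComponent_eq_zero'
    intro d hd
    rw [degree_fin2]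
    have := MvPolynomial.support_add hd
    rw [Finset.mem_union] at this
    rcases this with h | h
    · obtain ⟨a, ha, b, hb, rfl⟩ := Finset.mem_add.mp (MvPolynomial.support_mul _ _ h)
      have hbC : b ∈ C.support ∧ degm b ≠ nC := by
        constructor
        · by_contra hb'
          have : coeff b (C - hcC) = 0 := by
            rw [MvPolynomial.coeff_sub, MvPolynomial.notMem_support_iff.mp hb',
              hhcC, coeff_homogeneousComponent]
            simp [MvPolynomial.notMem_support_iff.mp hb']
          exact (MvPolynomial.mem_support_iff.mp hb) this
        · intro hb'
          have : coeff b (C - hcC) = 0 := by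
            rw [MvPolynomial.coeff_sub, hhcC, coeff_homogeneousComponent,
              if_pos (by rw [degree_fin2]; exact hb')]
            ring
          exact (MvPolynomial.mem_support_iff.mp hb) this
      intro hsum
      have : degm a + degm b = nB + nC := by rw [← addm]; exact hsum
      rw [hBdeg a ha] at this
      exact hbC.2 (by omega)
    · obtain ⟨a, ha, b, hb, rfl⟩ := Finset.mem_add.mp (MvPolynomial.support_mul _ _ h)
      have haB : a ∈ B.support ∧ degm a ≠ nB := by
        constructor
        · by_contra ha'
          have : coeff a (B - hcB) = 0 := by
            rw [MvPolynomial.coeff_sub, MvPolynomial.notMem_support_iff.mp ha',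
              hhcB, coeff_homogeneousComponent]
            simp [MvPolynomial.notMem_support_iff.mp ha']
          exact (MvPolynomial.mem_support_iff.mp ha) this
        · intro ha'
          have : coeff a (B - hcB) = 0 := by
            rw [MvPolynomial.coeff_sub, hhcB, coeff_homogeneousComponent,
              if_pos (by rw [degree_fin2]; exact ha')]
            ring
          exact (MvPolynomial.mem_support_iff.mp ha) this
      intro hsum
      have hsum' : degm a + degm b = nB + nC := by rw [← addm]; exact hsum
      exact haB.2 (H a haB.1 b hb hsum')
  rw [hsplit, map_add, hz, add_zero]
  have : hcB * hcC ∈ homogeneousSubmodule (Fin 2) ℂ (nB + nC) :=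
    (homogeneousComponent_isHomogeneous nB B).mul (homogeneousComponent_isHomogeneous nC C)
  rw [homogeneousComponent_of_mem this, if_pos rfl]

lemma isHomog_of_mul {A B C : R2} {d : ℕ} (hA : A.IsHomogeneous d) (hA0 : A ≠ 0)
    (hABC : A = B * C) :
    ∃ db dc, B.IsHomogeneous db ∧ C.IsHomogeneous dc ∧ db + dc = d := by
  classical
  have hB0 : B ≠ 0 := fun h => hA0 (by rw [hABC, h, zero_mul])
  have hC0 : C ≠ 0 := fun h => hA0 (by rw [hABC, h, mul_zero])
  have hBne : (B.support.image degm).Nonempty :=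
    (Finset.image_nonempty).mpr (MvPolynomial.support_nonempty.mpr hB0)
  have hCne : (C.support.image degm).Nonempty :=
    (Finset.image_nonempty).mpr (MvPolynomial.support_nonempty.mpr hC0)
  set tB := (B.support.image degm).max' hBne
  set tC := (C.support.image degm).max' hCne
  set bB := (B.support.image degm).min' hBne
  set bC := (C.support.image degm).min' hCne
  have hcne : ∀ (P : R2) (hP : P ≠ 0) (n : ℕ),
      (∃ m ∈ P.support, degm m = n) → homogeneousComponent n P ≠ 0 := by
    intro P hP n ⟨m, hm, hdm⟩
    intro h0
    have : coeff m (homogeneousComponent n P) = coeff m P := by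
      rw [coeff_homogeneousComponent, if_pos (by rw [degree_fin2]; exact hdm)]
    rw [h0, MvPolynomial.coeff_zero] at this
    exact (MvPolynomial.mem_support_iff.mp hm) this.symm
  have hAcomp : ∀ n : ℕ, homogeneousComponent n A = if n = d then A else 0 :=
    fun n => homogeneousComponent_of_mem hA
  -- top degrees
  have htop : tB + tC = d := by
    obtain ⟨mB', hmB', hdB'⟩ : ∃ m ∈ B.support, degm m = tB := by
      obtain ⟨m, hm, h⟩ := Finset.mem_image.mp ((B.support.image degm).max'_mem hBne)
      exact ⟨m, hm, h⟩
    obtain ⟨mC', hmC', hdC'⟩ : ∃ m ∈ C.support, degm m = tC := by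
      obtain ⟨m, hm, h⟩ := Finset.mem_image.mp ((C.support.image degm).max'_mem hCne)
      exact ⟨m, hm, h⟩
    have hmul : homogeneousComponent (tB + tC) (B * C)
        = homogeneousComponent tB B * homogeneousComponent tC C := by
      apply hc_mul_top
      intro a ha b hb hsum
      have h1 : degm a ≤ tB := Finset.le_max' _ _ (Finset.mem_image_of_mem degm ha)
      have h2 : degm b ≤ tC := Finset.le_max' _ _ (Finset.mem_image_of_mem degm hb)
      omega
    have hne : homogeneousComponent (tB + tC) A ≠ 0 := by
      rw [hABC, hmul]
      exact mul_ne_zero (hcne B hB0 tB ⟨mB', hmB', hdB'⟩) (hcne C hC0 tC ⟨mC', hmC', hdC'⟩)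
    by_contra h
    rw [hAcomp, if_neg h] at hne
    exact hne rfl
  have hbot : bB + bC = d := by
    obtain ⟨mB', hmB', hdB'⟩ : ∃ m ∈ B.support, degm m = bB := by
      obtain ⟨m, hm, h⟩ := Finset.mem_image.mp ((B.support.image degm).min'_mem hBne)
      exact ⟨m, hm, h⟩
    obtain ⟨mC', hmC', hdC'⟩ : ∃ m ∈ C.support, degm m = bC := by
      obtain ⟨m, hm, h⟩ := Finset.mem_image.mp ((C.support.image degm).min'_mem hCne)
      exact ⟨m, hm, h⟩
    have hmul : homogeneousComponent (bB + bC) (B * C)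
        = homogeneousComponent bB B * homogeneousComponent bC C := by
      apply hc_mul_top
      intro a ha b hb hsum
      have h1 : bB ≤ degm a := Finset.min'_le _ _ (Finset.mem_image_of_mem degm ha)
      have h2 : bC ≤ degm b := Finset.min'_le _ _ (Finset.mem_image_of_mem degm hb)
      omega
    have hne : homogeneousComponent (bB + bC) A ≠ 0 := by
      rw [hABC, hmul]
      exact mul_ne_zero (hcne B hB0 bB ⟨mB', hmB', hdB'⟩) (hcne C hC0 bC ⟨mC', hmC', hdC'⟩)
    by_contra h
    rw [hAcomp, if_neg h] at hne
    exact hne rfl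
  have hbB : bB ≤ tB := Finset.min'_le _ _ (Finset.max'_mem _ _)
  have hbC : bC ≤ tC := Finset.min'_le _ _ (Finset.max'_mem _ _)
  refine ⟨tB, tC, ?_, ?_, htop⟩
  · rw [isHomog_iff]
    intro m hm
    have h1 : degm m ≤ tB := Finset.le_max' _ _ (Finset.mem_image_of_mem degm hm)
    have h2 : bB ≤ degm m := Finset.min'_le _ _ (Finset.mem_image_of_mem degm hm)
    have : degm m = tB := by omega
    simpa [degm] using this
  · rw [isHomog_iff]
    intro m hm
    have h1 : degm m ≤ tC := Finset.le_max' _ _ (Finset.mem_image_of_mem degm hm)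
    have h2 : bC ≤ degm m := Finset.min'_le _ _ (Finset.mem_image_of_mem degm hm)
    have : degm m = tC := by omega
    simpa [degm] using this

namespace MvPolynomial
section ExpandSect
open Finsupp

/-! ### expand lemmas -/

lemma expand_monomial' {s : ℕ} (hs : 0 < s) (m : Fin 2 →₀ ℕ) (c : ℂ) :
    expand s (monomial m c) = monomial (s • m) c := by
  rw [expand_monomial, monomial_eq]

lemma expand_apply_sum {s : ℕ} (hs : 0 < s) (q : R2) :
    expand s q = ∑ m ∈ q.support, monomial (s • m) (coeff m q) := by
  conv_lhs => rw [← q.support_sum_monomial_coeff]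
  rw [map_sum]
  exact Finset.sum_congr rfl fun m _ => expand_monomial' hs m _

lemma supp_expand_subset {s : ℕ} (hs : 0 < s) (q : R2) {m : Fin 2 →₀ ℕ}
    (hm : m ∈ (expand s q).support) : ∃ n ∈ q.support, m = s • n := by
  classical
  rw [expand_apply_sum hs] at hm
  have := MvPolynomial.support_sum hm
  obtain ⟨n, hn, h⟩ := Finset.mem_biUnion.mp this
  refine ⟨n, hn, ?_⟩
  have : (monomial (s • n) (coeff n q)).support ⊆ {s • n} := MvPolynomial.support_monomial_subset
  simpa using this h

lemma monoS_expand {s : ℕ} (hs : 0 < s) (q : R2) : MonoS s (expand s q) := by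
  intro m hm
  obtain ⟨n, _, rfl⟩ := supp_expand_subset hs q hm
  exact ⟨⟨n 0, by simp [mul_comm]⟩, ⟨n 1, by simp [mul_comm]⟩⟩

lemma expand_homog {s : ℕ} (hs : 0 < s) {q : R2} {d : ℕ} (hq : q.IsHomogeneous d) :
    (expand s q).IsHomogeneous (s * d) := by
  rw [isHomog_iff]
  intro m hm
  obtain ⟨n, hn, rfl⟩ := supp_expand_subset hs q hm
  have := isHomog_iff.mp hq n hn
  simp only [Finsupp.smul_apply, smul_eq_mul]
  rw [← Nat.mul_add, this]

lemma coeff_expand' {s : ℕ} (hs : 0 < s) (q : R2) (n : Fin 2 →₀ ℕ) :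
    coeff (s • n) (expand s q) = coeff n q := by
  classical
  rw [expand_apply_sum hs, MvPolynomial.coeff_sum]
  have : ∀ m ∈ q.support, coeff (s • n) (monomial (s • m) (coeff m q))
      = if m = n then coeff m q else 0 := by
    intro m _
    rw [MvPolynomial.coeff_monomial]
    congr 1
    simp only [eq_iff_iff]
    constructor
    · intro h
      ext i
      have := DFunLike.congr_fun h i
      simp only [Finsupp.smul_apply, smul_eq_mul] at this
      exact Nat.eq_of_mul_eq_mul_left hs this
    · rintro rfl; rfl
  rw [Finset.sum_congr rfl this, Finset.sum_ite_eq' q.support n (fun m => coeff m q)]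
  split
  · rfl
  · next h => exact (MvPolynomial.notMem_support_iff.mp h).symm

/-- "shrink": left inverse of expand on `MonoS s` polynomials. -/
noncomputable def shrink (s : ℕ) (P : R2) : R2 :=
  ∑ m ∈ P.support, monomial (m.mapRange (· / s) (Nat.zero_div s)) (coeff m P)

lemma expand_shrink {s : ℕ} (hs : 0 < s) {P : R2} (hP : MonoS s P) :
    expand s (shrink s P) = P := by
  rw [shrink, map_sum]
  have : ∀ m ∈ P.support, expand s (monomial (m.mapRange (· / s) (Nat.zero_div s)) (coeff m P))
      = monomial m (coeff m P) := by
    intro m hm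
    rw [expand_monomial' hs]
    have hsm : s • m.mapRange (· / s) (Nat.zero_div s) = m := by
      ext i
      simp only [Finsupp.smul_apply, Finsupp.mapRange_apply, smul_eq_mul]
      have : s ∣ m i := by
        fin_cases i
        · exact (hP m hm).1
        · exact (hP m hm).2
      exact Nat.mul_div_cancel' this
    rw [hsm]
  rw [Finset.sum_congr rfl this, P.support_sum_monomial_coeff]

lemma shrink_homog {s : ℕ} (hs : 0 < s) {P : R2} {d : ℕ} (hP : MonoS s P)
    (hd : P.IsHomogeneous (s * d)) : (shrink s P).IsHomogeneous d := by
  rw [isHomog_iff]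
  intro m' hm'
  classical
  obtain ⟨m, hm, hmm⟩ : ∃ m ∈ P.support,
      m' ∈ (monomial (m.mapRange (· / s) (Nat.zero_div s)) (coeff m P)).support := by
    have := MvPolynomial.support_sum hm'
    obtain ⟨n, hn, h⟩ := Finset.mem_biUnion.mp this
    exact ⟨n, hn, h⟩
  have hsub : m' = m.mapRange (· / s) (Nat.zero_div s) := by
    have h2 : (monomial (m.mapRange (· / s) (Nat.zero_div s)) (coeff m P)).support
        ⊆ {m.mapRange (· / s) (Nat.zero_div s)} := MvPolynomial.support_monomial_subset
    exact Finset.mem_singleton.mp (h2 hmm)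
  subst hsub
  obtain ⟨a, ha⟩ := (hP m hm).1
  obtain ⟨b, hb⟩ := (hP m hm).2
  have hdm : m 0 + m 1 = s * d := isHomog_iff.mp hd m hm
  simp only [Finsupp.mapRange_apply, ha, hb]
  rw [Nat.mul_div_cancel_left a hs, Nat.mul_div_cancel_left b hs]
  have : s * (a + b) = s * d := by rw [Nat.mul_add, ← ha, ← hb]; exact hdm
  exact Nat.eq_of_mul_eq_mul_left hs this
end ExpandSect

end MvPolynomial

namespace MvPolynomial
/-! ### sections (σ-decomposition) -/

/-- the `i`-th section of `P` (which should be homogeneous of degree `d`). -/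
noncomputable def sect (s d i : ℕ) (P : R2) : R2 :=
  ∑ m ∈ P.support.filter (fun m => m 0 % s = i),
    monomial (m - (Finsupp.single 0 i + Finsupp.single 1 ((d - i) % s))) (coeff m P)

lemma sect_mem_arith {s d i : ℕ} (hs : 0 < s) (hi : i < s) {m : Fin 2 →₀ ℕ}
    (hdm : m 0 + m 1 = d) (hmod : m 0 % s = i) :
    i ≤ m 0 ∧ (d - i) % s ≤ m 1 ∧ s ∣ (m 0 - i) ∧ s ∣ (m 1 - (d - i) % s) ∧
      (m 0 - i) + (m 1 - (d - i) % s) = s * ((d - i) / s) := by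
  have h1 : m 0 % s + s * (m 0 / s) = m 0 := Nat.mod_add_div (m 0) s
  rw [hmod] at h1
  have hile : i ≤ m 0 := by omega
  have hdi : d - i = s * (m 0 / s) + m 1 := by omega
  have h2 : (d - i) % s = m 1 % s := by rw [hdi, Nat.mul_add_mod]
  have h3 : m 1 % s + s * (m 1 / s) = m 1 := Nat.mod_add_div (m 1) s
  have h4 : (d - i) % s + s * ((d - i) / s) = d - i := Nat.mod_add_div (d - i) s
  refine ⟨hile, by omega, ⟨m 0 / s, by omega⟩, ⟨m 1 / s, by omega⟩, by omega⟩

lemma sect_support {s d i : ℕ} {P : R2} {m' : Fin 2 →₀ ℕ} (hm' : m' ∈ (sect s d i P).support) :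
    ∃ m ∈ P.support, m 0 % s = i ∧
      m' = m - (Finsupp.single 0 i + Finsupp.single 1 ((d - i) % s)) := by
  classical
  obtain ⟨m, hm, h⟩ := Finset.mem_biUnion.mp (MvPolynomial.support_sum hm')
  rw [Finset.mem_filter] at hm
  refine ⟨m, hm.1, hm.2, ?_⟩
  have h2 : (monomial (m - (Finsupp.single 0 i + Finsupp.single 1 ((d - i) % s)))
      (coeff m P)).support ⊆ {m - (Finsupp.single 0 i + Finsupp.single 1 ((d - i) % s))} :=
    MvPolynomial.support_monomial_subset
  exact Finset.mem_singleton.mp (h2 h)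

lemma e_apply_0 (i r : ℕ) :
    ((Finsupp.single (0 : Fin 2) i + Finsupp.single 1 r : Fin 2 →₀ ℕ)) 0 = i := by
  simp
lemma e_apply_1 (i r : ℕ) :
    ((Finsupp.single (0 : Fin 2) i + Finsupp.single 1 r : Fin 2 →₀ ℕ)) 1 = r := by
  simp

lemma sect_monoS {s d i : ℕ} (hs : 0 < s) (hi : i < s) {P : R2} (hP : P.IsHomogeneous d) :
    MonoS s (sect s d i P) := by
  intro m' hm'
  obtain ⟨m, hm, hmod, rfl⟩ := sect_support hm'
  obtain ⟨_, _, hd0, hd1, _⟩ := sect_mem_arith hs hi (isHomog_iff.mp hP m hm) hmod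
  constructor
  · rwa [Finsupp.tsub_apply, e_apply_0]
  · rwa [Finsupp.tsub_apply, e_apply_1]

lemma sect_homog {s d i : ℕ} (hs : 0 < s) (hi : i < s) {P : R2} (hP : P.IsHomogeneous d) :
    (sect s d i P).IsHomogeneous (s * ((d - i) / s)) := by
  rw [isHomog_iff]
  intro m' hm'
  obtain ⟨m, hm, hmod, rfl⟩ := sect_support hm'
  obtain ⟨h0, h1, _, _, hsum⟩ := sect_mem_arith hs hi (isHomog_iff.mp hP m hm) hmod
  rw [Finsupp.tsub_apply, Finsupp.tsub_apply, e_apply_0, e_apply_1]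
  exact hsum

lemma sect_eq_zero {s d i : ℕ} (hi : i < s) {P : R2} (hP : P.IsHomogeneous d) (hd : d < i) :
    sect s d i P = 0 := by
  rw [sect]
  apply Finset.sum_eq_zero
  intro m hm
  rw [Finset.mem_filter] at hm
  exfalso
  have := isHomog_iff.mp hP m hm.1
  have := Nat.mod_le (m 0) s
  omega

lemma sect_term {s d i : ℕ} (hs : 0 < s) (hi : i < s) {P : R2} (hP : P.IsHomogeneous d) :
    X 0 ^ i * X 1 ^ ((d - i) % s) * sect s d i P
      = ∑ m ∈ P.support.filter (fun m => m 0 % s = i), monomial m (coeff m P) := by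
  rw [sect, Finset.mul_sum]
  apply Finset.sum_congr rfl
  intro m hm
  rw [Finset.mem_filter] at hm
  obtain ⟨h0, h1, _, _, _⟩ := sect_mem_arith hs hi (isHomog_iff.mp hP m hm.1) hm.2
  rw [X_pow_eq_monomial, X_pow_eq_monomial, monomial_mul, monomial_mul, one_mul, one_mul]
  have hle : Finsupp.single (0 : Fin 2) i + Finsupp.single 1 ((d - i) % s) ≤ m := by
    rw [Finsupp.le_def]
    intro j
    fin_cases j
    · simpa using h0
    · simpa using h1
  rw [add_tsub_cancel_of_le hle]

lemma sect_sum {s d : ℕ} (hs : 0 < s) {P : R2} (hP : P.IsHomogeneous d) :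
    ∑ i : Fin s, X 0 ^ (i : ℕ) * X 1 ^ ((d - (i : ℕ)) % s) * sect s d (i : ℕ) P = P := by
  classical
  have : ∀ i : Fin s, X 0 ^ (i : ℕ) * X 1 ^ ((d - (i : ℕ)) % s) * sect s d (i : ℕ) P
      = ∑ m ∈ P.support.filter (fun m => (⟨m 0 % s, Nat.mod_lt _ hs⟩ : Fin s) = i),
          monomial m (coeff m P) := by
    intro i
    rw [sect_term hs i.isLt hP]
    apply Finset.sum_congr _ (fun _ _ => rfl)
    apply Finset.filter_congr
    intro m _
    exact ⟨fun h => Fin.ext h, fun h => congrArg Fin.val h⟩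
  rw [Finset.sum_congr rfl (fun i _ => this i)]
  rw [Finset.sum_fiberwise _ (fun m => (⟨m 0 % s, Nat.mod_lt _ hs⟩ : Fin s))
    (fun m => monomial m (coeff m P))]
  exact P.support_sum_monomial_coeff

/-! ### uniqueness of shifted decompositions -/

lemma supp_shift {s a b : ℕ} {p : R2} (hp : MonoS s p) {m : Fin 2 →₀ ℕ}
    (hm : m ∈ (X 0 ^ a * X 1 ^ b * p).support) : m 0 % s = a % s := by
  classical
  rw [X_pow_eq_monomial, X_pow_eq_monomial, monomial_mul, one_mul] at hm
  obtain ⟨u, hu, v, hv, rfl⟩ := Finset.mem_add.mp (MvPolynomial.support_mul _ _ hm)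
  have hu' : u = Finsupp.single (0 : Fin 2) a + Finsupp.single 1 b := by
    have h2 : (monomial (Finsupp.single (0 : Fin 2) a + Finsupp.single 1 b)
        (1 : ℂ)).support ⊆ {Finsupp.single (0 : Fin 2) a + Finsupp.single 1 b} :=
      MvPolynomial.support_monomial_subset
    exact Finset.mem_singleton.mp (h2 hu)
  subst hu'
  obtain ⟨t, ht⟩ := (hp v hv).1
  have : ((Finsupp.single (0 : Fin 2) a + Finsupp.single 1 b + v : Fin 2 →₀ ℕ)) 0
      = a + s * t := by
    simp [ht]
  rw [this, Nat.add_mul_mod_self_left]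

lemma shift_sum_eq_zero {s : ℕ} (hs : 0 < s) {p : Fin s → R2} {r : Fin s → ℕ}
    (hp : ∀ i, MonoS s (p i))
    (h : ∑ i : Fin s, X 0 ^ (i : ℕ) * X 1 ^ (r i) * p i = 0) : ∀ i, p i = 0 := by
  intro i
  have hterm : X 0 ^ (i : ℕ) * X 1 ^ (r i) * p i = 0 := by
    by_contra hne
    obtain ⟨m, hm⟩ := MvPolynomial.support_nonempty.mpr hne
    have hcoeff : ∀ j : Fin s, j ≠ i → coeff m (X 0 ^ (j : ℕ) * X 1 ^ (r j) * p j) = 0 := by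
      intro j hj
      by_contra hc
      have hmj := supp_shift (hp j) (MvPolynomial.mem_support_iff.mpr hc)
      have hmi := supp_shift (hp i) hm
      rw [Nat.mod_eq_of_lt j.isLt] at hmj
      rw [Nat.mod_eq_of_lt i.isLt] at hmi
      exact hj (Fin.ext (by omega))
    have : coeff m (∑ j : Fin s, X 0 ^ (j : ℕ) * X 1 ^ (r j) * p j)
        = coeff m (X 0 ^ (i : ℕ) * X 1 ^ (r i) * p i) := by
      rw [MvPolynomial.coeff_sum]
      exact Finset.sum_eq_single i (fun j _ hj => hcoeff j hj) (fun hni => absurd (Finset.mem_univ i) hni)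
    rw [h, MvPolynomial.coeff_zero] at this
    exact (MvPolynomial.mem_support_iff.mp hm) this.symm
  rcases mul_eq_zero.mp hterm with h1 | h1
  · exfalso
    rcases mul_eq_zero.mp h1 with h2 | h2 <;>
    · rw [X_pow_eq_monomial] at h2
      exact one_ne_zero (MvPolynomial.monomial_eq_zero.mp h2)
  · exact h1

/-! ### divisibility reflection along expand -/

lemma expand_dvd_reflect {s : ℕ} (hs : 0 < s) {a b : R2} {da db : ℕ}
    (ha : a.IsHomogeneous da) (hb : b.IsHomogeneous db)
    (h : expand s a ∣ expand s b) : a ∣ b := by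
  classical
  by_cases ha0 : a = 0
  · subst ha0
    rw [map_zero, zero_dvd_iff] at h
    have : b = 0 := by
      ext n
      rw [← coeff_expand' hs b n, h]
      simp
    rw [this]
  obtain ⟨c, hc⟩ := h
  have hea0 : expand s a ≠ 0 := fun h0 => ha0 (by
    ext n; rw [← coeff_expand' hs a n, h0]; simp)
  by_cases hb0 : b = 0
  · rw [hb0]; exact dvd_zero a
  have heb0 : expand s b ≠ 0 := fun h0 => hb0 (by
    ext n; rw [← coeff_expand' hs b n, h0]; simp)
  -- c is homogeneous of degree divisible by s
  obtain ⟨d1, dc, hd1, hdc, hsum⟩ :=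
    isHomog_of_mul (expand_homog hs hb) heb0 hc
  have hd1' : d1 = s * da := by
    have hea : (expand s a).IsHomogeneous (s * da) := expand_homog hs ha
    exact hd1.inj_right hea hea0
  subst hd1'
  have hdle : da ≤ db := by
    by_contra hlt
    push_neg at hlt
    have h1 : s * db < s * da := (Nat.mul_lt_mul_left hs).mpr hlt
    omega
  have hdcs : dc = s * (db - da) := by
    have h2 : s * (db - da) + s * da = s * db := by
      rw [← Nat.mul_add]; congr 1; omega
    omega
  -- decompose c into sections
  set i0 : Fin s := ⟨0, hs⟩ with hi0
  have hr0 : (dc - (i0 : ℕ)) % s = 0 := by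
    rw [hi0]
    simp only [Nat.sub_zero, hdcs]
    exact Nat.mul_mod_right s _
  set p : Fin s → R2 := fun i =>
    expand s a * sect s dc (i : ℕ) c - (if i = i0 then expand s b else 0) with hp
  have hpm : ∀ i, MonoS s (p i) := by
    intro i
    apply MonoS.sub
    · exact (monoS_expand hs a).mul (sect_monoS hs i.isLt hdc)
    · split
      · exact monoS_expand hs b
      · exact MonoS.zero s
  have hzero : ∑ i : Fin s, X 0 ^ (i : ℕ) * X 1 ^ ((dc - (i : ℕ)) % s) * p i = 0 := by
    simp only [hp, mul_sub]
    rw [Finset.sum_sub_distrib]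
    have h1 : ∑ i : Fin s, X 0 ^ (i : ℕ) * X 1 ^ ((dc - (i : ℕ)) % s)
        * (expand s a * sect s dc (i : ℕ) c) = expand s b := by
      have : ∀ i : Fin s, X 0 ^ (i : ℕ) * X 1 ^ ((dc - (i : ℕ)) % s)
          * (expand s a * sect s dc (i : ℕ) c)
          = expand s a * (X 0 ^ (i : ℕ) * X 1 ^ ((dc - (i : ℕ)) % s) * sect s dc (i : ℕ) c) := by
        intro i; ring
      rw [Finset.sum_congr rfl (fun i _ => this i), ← Finset.mul_sum, sect_sum hs hdc, ← hc]
    have h2 : ∑ i : Fin s, X 0 ^ (i : ℕ) * X 1 ^ ((dc - (i : ℕ)) % s)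
        * (if i = i0 then expand s b else 0) = expand s b := by
      have : ∀ i : Fin s, X 0 ^ (i : ℕ) * X 1 ^ ((dc - (i : ℕ)) % s)
          * (if i = i0 then expand s b else 0)
          = if i = i0 then X 0 ^ (i : ℕ) * X 1 ^ ((dc - (i : ℕ)) % s) * expand s b else 0 := by
        intro i; split <;> simp
      rw [Finset.sum_congr rfl (fun i _ => this i), Finset.sum_ite_eq' Finset.univ i0]
      rw [if_pos (Finset.mem_univ i0)]
      rw [hr0]
      simp [hi0]
    rw [h1, h2, sub_self]
  have hpz := shift_sum_eq_zero hs hpm hzero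
  have hkey : expand s a * sect s dc 0 c = expand s b := by
    have := hpz i0
    rw [hp] at this
    simp only [if_pos rfl] at this
    have h3 : (i0 : ℕ) = 0 := rfl
    rw [sub_eq_zero] at this
    rw [← h3]
    exact this
  -- conclude
  refine ⟨shrink s (sect s dc 0 c), (expand_inj hs).mp ?_⟩
  rw [map_mul, expand_shrink hs (sect_monoS hs hs hdc), hkey]

end MvPolynomial
namespace MvPolynomial
/-! ### homogeneous binary forms: linear factors -/

noncomputable def Phi : MvPolynomial (Fin 2) ℂ →ₐ[ℂ] Polynomial ℂ :=
  aeval ![Polynomial.X, 1]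

lemma Phi_apply (P : R2) :
    Phi P = ∑ m ∈ P.support, Polynomial.C (coeff m P) * Polynomial.X ^ (m 0) := by
  conv_lhs => rw [← P.support_sum_monomial_coeff]
  rw [map_sum]
  apply Finset.sum_congr rfl
  intro m _
  rw [Phi, aeval_monomial]
  have hpf : (m.prod fun n e => (![Polynomial.X, (1 : Polynomial ℂ)] n) ^ e)
      = ∏ i : Fin 2, (![Polynomial.X, (1 : Polynomial ℂ)] i) ^ (m i) :=
    Finsupp.prod_fintype m _ (fun i => pow_zero (![Polynomial.X, (1 : Polynomial ℂ)] i))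
  rw [hpf, Fin.prod_univ_two]
  simp [Polynomial.algebraMap_eq]

lemma Phi_coeff {P : R2} {d : ℕ} (hP : P.IsHomogeneous d) (j : ℕ) :
    (Phi P).coeff j = coeff (Finsupp.single 0 j + Finsupp.single 1 (d - j)) P := by
  classical
  set mj : Fin 2 →₀ ℕ := Finsupp.single 0 j + Finsupp.single 1 (d - j) with hmj
  have hmj0 : mj 0 = j := e_apply_0 _ _
  have hmj1 : mj 1 = d - j := e_apply_1 _ _
  rw [Phi_apply, Polynomial.finset_sum_coeff]
  have : ∀ m ∈ P.support,
      (Polynomial.C (coeff m P) * Polynomial.X ^ (m 0)).coeff j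
        = if m = mj then coeff m P else 0 := by
    intro m hm
    rw [Polynomial.coeff_C_mul, Polynomial.coeff_X_pow]
    have hdm : m 0 + m 1 = d := isHomog_iff.mp hP m hm
    by_cases h : m = mj
    · subst h
      rw [if_pos rfl, if_pos (by omega), mul_one]
    · rw [if_neg h]
      have hne : ¬ (m 0 = j) := by
        intro h0
        apply h
        ext i
        fin_cases i
        · simpa [hmj] using h0
        · have hm1 : m 1 = d - j := by omega
          simpa [hmj] using hm1
      rw [if_neg (fun hh => hne hh.symm), mul_zero]
  rw [Finset.sum_congr rfl this, Finset.sum_ite_eq' P.support mj (fun m => coeff m P)]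
  split
  · rfl
  · next h => exact (MvPolynomial.notMem_support_iff.mp h).symm

lemma Phi_inj_homog {P Q : R2} {d : ℕ} (hP : P.IsHomogeneous d) (hQ : Q.IsHomogeneous d)
    (h : Phi P = Phi Q) : P = Q := by
  ext m
  by_cases hd : m 0 + m 1 = d
  · have hm : m = Finsupp.single 0 (m 0) + Finsupp.single 1 (d - m 0) := by
      ext i
      fin_cases i
      · simp
      · have h1 : m 1 = d - m 0 := by omega
        simpa using h1
    rw [hm, ← Phi_coeff hP (m 0), ← Phi_coeff hQ (m 0), h]
  · rw [hP.coeff_eq_zero (by rw [degree_fin2]; exact hd),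
      hQ.coeff_eq_zero (by rw [degree_fin2]; exact hd)]

lemma multiset_prod_homog (t : Multiset R2) (h : ∀ x ∈ t, x.IsHomogeneous 1) :
    t.prod.IsHomogeneous (Multiset.card t) := by
  induction t using Multiset.induction_on with
  | empty => simpa using isHomogeneous_one (Fin 2) ℂ
  | cons a t ih =>
    rw [Multiset.prod_cons, Multiset.card_cons]
    have := (h a (Multiset.mem_cons_self a t)).mul
      (ih (fun x hx => h x (Multiset.mem_cons_of_mem hx)))
    rwa [add_comm] at this

lemma exists_linear_divisor {W : R2} {m : ℕ} (hW : W.IsHomogeneous m) (hW0 : W ≠ 0)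
    (hm : 1 ≤ m) : ∃ l : R2, l.IsHomogeneous 1 ∧ l ∣ W := by
  classical
  set mtop : Fin 2 →₀ ℕ := Finsupp.single 0 m + Finsupp.single 1 0 with hmtop
  by_cases hc : coeff mtop W = 0
  · -- X 1 divides W
    refine ⟨X 1, isHomogeneous_X ℂ 1, ?_⟩
    have hsupp : ∀ n ∈ W.support, 1 ≤ n 1 := by
      intro n hn
      by_contra h0
      push_neg at h0
      have hdn : n 0 + n 1 = m := isHomog_iff.mp hW n hn
      have hnm : n = mtop := by
        ext i
        fin_cases i
        · have h00 : n 0 = m := by omega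
          simpa [hmtop] using h00
        · have h11 : n 1 = 0 := by omega
          simpa [hmtop] using h11
      rw [← hnm] at hc
      exact (MvPolynomial.mem_support_iff.mp hn) hc
    refine ⟨∑ n ∈ W.support, monomial (n - Finsupp.single 1 1) (coeff n W), ?_⟩
    rw [Finset.mul_sum]
    have : ∀ n ∈ W.support,
        X 1 * monomial (n - Finsupp.single 1 1) (coeff n W) = monomial n (coeff n W) := by
      intro n hn
      rw [X, monomial_mul, one_mul]
      have hle : Finsupp.single (1 : Fin 2) 1 ≤ n := by
        rw [Finsupp.le_def]
        intro j
        fin_cases j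
        · simp
        · simpa using hsupp n hn
      rw [add_tsub_cancel_of_le hle]
    rw [Finset.sum_congr rfl this, W.support_sum_monomial_coeff]
  · -- W has a root; extract a linear factor via Phi
    set f := Phi W with hf
    have hfm : f.coeff m = coeff mtop W := by
      rw [hf, Phi_coeff hW m, hmtop, Nat.sub_self]
    have hf0 : f ≠ 0 := fun h0 => hc (by rw [← hfm, h0, Polynomial.coeff_zero])
    have hdeg : f.natDegree = m := by
      apply le_antisymm
      · rw [Polynomial.natDegree_le_iff_coeff_eq_zero]
        intro j hj
        rw [hf, Phi_coeff hW j]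
        apply hW.coeff_eq_zero
        rw [degree_fin2, e_apply_0, e_apply_1]
        omega
      · exact Polynomial.le_natDegree_of_ne_zero (by rw [hfm]; exact hc)
    have hsplits : f.Splits := IsAlgClosed.splits f
    have hfactor : f = Polynomial.C f.leadingCoeff
        * (f.roots.map (fun a => Polynomial.X - Polynomial.C a)).prod :=
      hsplits.eq_prod_roots
    have hcard : Multiset.card f.roots = m := by
      rw [← hdeg]
      exact (Polynomial.splits_iff_card_roots.mp hsplits)
    set W' : R2 := C f.leadingCoeff * (f.roots.map (fun a : ℂ => ((X 0 - C a * X 1 : R2)))).prod with hW'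
    have hPhiW' : Phi W' = f := by
      rw [hW', map_mul, map_multiset_prod, Multiset.map_map]
      have : ∀ a ∈ f.roots, (Phi ∘ fun a => X 0 - C a * X 1) a
          = Polynomial.X - Polynomial.C a := by
        intro a _
        simp [Phi]
      rw [Multiset.map_congr rfl this]
      have hPc : Phi (C f.leadingCoeff) = Polynomial.C f.leadingCoeff := by
        simp [Phi]
      rw [hPc, ← hfactor]
    have hW'h : W'.IsHomogeneous m := by
      rw [hW']
      have hall : ∀ x ∈ f.roots.map (fun a : ℂ => ((X 0 - C a * X 1 : R2))), IsHomogeneous x 1 := by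
        intro x hx
        obtain ⟨a, _, rfl⟩ := Multiset.mem_map.mp hx
        exact (isHomogeneous_X ℂ 0).sub (by
          simpa using (isHomogeneous_C (Fin 2) a).mul (isHomogeneous_X ℂ 1))
      have h1 := multiset_prod_homog _ hall
      rw [Multiset.card_map, hcard] at h1
      exact h1.C_mul f.leadingCoeff
    have hWW' : W = W' := Phi_inj_homog hW hW'h (by rw [hPhiW', hf])
    obtain ⟨a, ha⟩ := Multiset.card_pos_iff_exists_mem.mp (by rw [hcard]; omega)
    refine ⟨X 0 - C a * X 1, ?_, ?_⟩
    · exact (isHomogeneous_X ℂ 0).sub (by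
        simpa using (isHomogeneous_C (Fin 2) a).mul (isHomogeneous_X ℂ 1))
    · rw [hWW', hW']
      exact Dvd.dvd.mul_left
        (Multiset.dvd_prod (Multiset.mem_map_of_mem _ ha)) _

lemma exists_homog_divisor {P : R2} {d : ℕ} (hP : P.IsHomogeneous d) (hP0 : P ≠ 0)
    (n : ℕ) (hn : n ≤ d) : ∃ c : R2, c.IsHomogeneous n ∧ c ∣ P := by
  induction n with
  | zero => exact ⟨1, isHomogeneous_one (Fin 2) ℂ, one_dvd P⟩
  | succ n ih =>
    obtain ⟨c, hch, hcd⟩ := ih (by omega)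
    obtain ⟨W, hw⟩ := hcd
    have hc0 : c ≠ 0 := fun h => hP0 (by rw [hw, h, zero_mul])
    have hW0 : W ≠ 0 := fun h => hP0 (by rw [hw, h, mul_zero])
    obtain ⟨db, dc, hdb, hdc, hsum⟩ := isHomog_of_mul hP hP0 hw
    have hdbn : db = n := hdb.inj_right hch hc0
    subst hdbn
    obtain ⟨l, hl1, hld⟩ := exists_linear_divisor hdc hW0 (by omega)
    refine ⟨c * l, ?_, ?_⟩
    · exact hch.mul hl1
    · rw [hw]
      exact mul_dvd_mul_left c hld

end MvPolynomial

namespace MvPolynomial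
/-! ### misc helpers -/

lemma MonoS.one_poly (s : ℕ) : MonoS s (1 : R2) := by
  intro m hm
  have h2 : (1 : R2).support ⊆ {0} := by
    rw [show (1 : R2) = monomial 0 1 by simp]
    exact MvPolynomial.support_monomial_subset
  have := Finset.mem_singleton.mp (h2 hm)
  subst this
  simp

lemma MonoS.prod {s : ℕ} {ι : Type*} (t : Finset ι) (f : ι → R2)
    (h : ∀ i ∈ t, MonoS s (f i)) : MonoS s (∏ i ∈ t, f i) := by
  classical
  induction t using Finset.induction_on with
  | empty => simpa using MonoS.one_poly s
  | insert a t2 hni ih =>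
    rw [Finset.prod_insert hni]
    exact (h a (Finset.mem_insert_self a t2)).mul
      (ih (fun i hi => h i (Finset.mem_insert_of_mem hi)))

lemma shrink_zero (s : ℕ) : shrink s (0 : R2) = 0 := by
  rw [shrink]
  simp

lemma homog_deg_dvd {s : ℕ} {P : R2} {d : ℕ} (hP : P.IsHomogeneous d) (hm : MonoS s P)
    (h0 : P ≠ 0) : s ∣ d := by
  obtain ⟨m, hmem⟩ := MvPolynomial.support_nonempty.mpr h0
  have := isHomog_iff.mp hP m hmem
  obtain ⟨h1, h2⟩ := hm m hmem
  rw [← this]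
  exact Nat.dvd_add h1 h2

/-- key extraction step: a `MonoS`-homogeneous common divisor of the `q i` of
prescribed degree `s0 * n`. -/
lemma key_extract {s0 n : ℕ} (hs0 : 0 < s0) {D E : R2} {e dE : ℕ}
    (hD : D.IsHomogeneous e) (hDm : MonoS s0 D) (hD0 : D ≠ 0)
    (hE : E.IsHomogeneous dE) (hEm : MonoS s0 E) (hE0 : E ≠ 0)
    (hse : s0 * n + dE ≤ e)
    {ι : Type*} [Fintype ι] (q : ι → R2) (dq : ι → ℕ)
    (hqh : ∀ i, (q i).IsHomogeneous (dq i)) (hqm : ∀ i, MonoS s0 (q i))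
    {i0 : ι} (hqne : q i0 ≠ 0)
    (hdvd : ∀ i, D ∣ q i * E) :
    ∃ c : R2, c.IsHomogeneous (s0 * n) ∧ MonoS s0 c ∧ c ≠ 0 ∧ ∀ i, c ∣ q i := by
  classical
  letI : GCDMonoid R2 := UniqueFactorizationMonoid.toGCDMonoid R2
  obtain ⟨et, het⟩ := homog_deg_dvd hD hDm hD0
  obtain ⟨dEt, hdEt⟩ := homog_deg_dvd hE hEm hE0
  set Dt := shrink s0 D with hDt
  set Et := shrink s0 E with hEt2
  have hexD : expand s0 Dt = D := expand_shrink hs0 hDm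
  have hexE : expand s0 Et = E := expand_shrink hs0 hEm
  have hDth : Dt.IsHomogeneous et := shrink_homog hs0 hDm (by rwa [← het])
  have hEth : Et.IsHomogeneous dEt := shrink_homog hs0 hEm (by rwa [← hdEt])
  have hDt0 : Dt ≠ 0 := fun h => hD0 (by rw [← hexD, h, map_zero])
  have hEt0 : Et ≠ 0 := fun h => hE0 (by rw [← hexE, h, map_zero])
  -- transported divisibilities
  have hdvdt : ∀ i, Dt ∣ shrink s0 (q i) * Et := by
    intro i
    apply expand_dvd_reflect hs0 hDth
      ((shrink_homog hs0 (hqm i) (?_ : (q i).IsHomogeneous (s0 * (dq i / s0)))).mul hEth)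
    · rw [map_mul, hexD, hexE, expand_shrink hs0 (hqm i)]
      exact hdvd i
    · by_cases hqi : q i = 0
      · rw [hqi]; exact isHomogeneous_zero _ _ _
      · obtain ⟨u, hu⟩ := homog_deg_dvd (hqh i) (hqm i) hqi
        rw [hu, Nat.mul_div_cancel_left u hs0, ← hu]
        exact hqh i
  -- gcd step
  obtain ⟨D', hD'⟩ := gcd_dvd_left Dt Et
  have hG0 : gcd Dt Et ≠ 0 := fun h => hDt0 (by rw [hD', h, zero_mul])
  have hD'dvd : ∀ i, D' ∣ shrink s0 (q i) := by
    intro i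
    have h2 : Dt ∣ Et * shrink s0 (q i) := mul_comm (shrink s0 (q i)) Et ▸ hdvdt i
    have h3 : Dt ∣ gcd Dt Et * shrink s0 (q i) := dvd_gcd_mul_of_dvd_mul h2
    have h4 : gcd Dt Et * D' ∣ gcd Dt Et * shrink s0 (q i) := hD' ▸ h3
    exact (mul_dvd_mul_iff_left hG0).mp h4
  -- degrees
  obtain ⟨dG, dD', hGh, hD'h, hsumG⟩ := isHomog_of_mul hDth hDt0 hD'
  have hGle : dG ≤ dEt := by
    obtain ⟨w, hw⟩ := gcd_dvd_right Dt Et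
    obtain ⟨dG2, dw, hG2, _, hsum2⟩ := isHomog_of_mul hEth hEt0 hw
    have : dG = dG2 := hGh.inj_right hG2 hG0
    omega
  have hD'0 : D' ≠ 0 := fun h => hDt0 (by rw [hD', h, mul_zero])
  have hnle : n ≤ dD' := by
    have h1 : s0 * et = e := het.symm
    have h2 : s0 * dEt = dE := hdEt.symm
    have h3 : s0 * n + s0 * dEt ≤ s0 * et := by omega
    have h4 : s0 * (n + dEt) ≤ s0 * et := by rwa [Nat.mul_add]
    have h5 : n + dEt ≤ et := Nat.le_of_mul_le_mul_left h4 hs0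
    omega
  obtain ⟨ct, hcth, hctd⟩ := exists_homog_divisor hD'h hD'0 n hnle
  have hct0 : ct ≠ 0 := fun h => hD'0 (by
    obtain ⟨w, hw⟩ := hctd
    rw [hw, h, zero_mul])
  refine ⟨expand s0 ct, expand_homog hs0 hcth, monoS_expand hs0 ct,
    (expand_ne_zero hs0).mpr hct0, ?_⟩
  intro i
  have h1 : ct ∣ shrink s0 (q i) := hctd.trans (hD'dvd i)
  have := map_dvd (expand s0 (R := ℂ) (σ := Fin 2)) h1
  rwa [expand_shrink hs0 (hqm i)] at this

end MvPolynomial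


open MvPolynomial in
lemma prod_Ico_shift (f : ℕ → MvPolynomial (Fin 2) ℂ) (L : ℕ) (hL : 2 ≤ L) :
    ∏ j ∈ Finset.Ico 2 L, f (j - 1) = ∏ i ∈ Finset.Ico 1 (L - 1), f i := by
  rw [Finset.prod_Ico_eq_prod_range, Finset.prod_Ico_eq_prod_range]
  have h : L - 2 = L - 1 - 1 := by omega
  rw [h]
  exact Finset.prod_congr rfl (fun i _ => by congr 1; omega)

lemma Sp_zero (s : ℕ → ℕ) : Sp s 0 = 1 := Finset.prod_range_zero _
lemma Sp_one (s : ℕ → ℕ) : Sp s 1 = s 0 := Finset.prod_range_one s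
lemma Sp_succ (s : ℕ → ℕ) (i : ℕ) : Sp s (i + 1) = Sp s i * s i := Finset.prod_range_succ _ _
lemma s0_dvd_Sp (s : ℕ → ℕ) {i : ℕ} (hi : 1 ≤ i) : s 0 ∣ Sp s i :=
  Finset.dvd_prod_of_mem _ (Finset.mem_range.mpr (by omega))

lemma Sp'_eq {s s' : ℕ → ℕ} (hs'0 : s' 0 = s 0 * s 1)
    (hs' : ∀ i, 1 ≤ i → s' i = s (i + 1)) {i : ℕ} (hi : 1 ≤ i) :
    Sp s' i = Sp s (i + 1) := by
  induction i, hi using Nat.le_induction with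
  | base =>
    rw [Sp_one, hs'0, Sp_succ, Sp_one]
  | succ m hm ih =>
    rw [Sp_succ, ih, hs' m hm, ← Sp_succ]

open MvPolynomial in
theorem stmt_5 (L : ℕ) (hL : 2 ≤ L) (k s : ℕ → ℕ)
    (hk : ∀ i < L, 1 ≤ k i) (hs : ∀ i < L, 1 ≤ s i)
    (K : ℕ) (hK : K = k 0 + ∑ i ∈ Finset.Ico 1 L, (k i - 1) * Sp s i)
    (k' s' : ℕ → ℕ)
    (hk'0 : k' 0 = k 0 + s 0 * (k 1 - 1)) (hk' : ∀ i, 1 ≤ i → k' i = k (i + 1))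
    (hs'0 : s' 0 = s 0 * s 1) (hs' : ∀ i, 1 ≤ i → s' i = s (i + 1)) :
    Fset L k s = { Q | Q ∈ Fset (L - 1) k' s' ∧
      ∃ (D : MvPolynomial (Fin 2) ℂ) (e : ℕ) (p : Fin (s 0) → MvPolynomial (Fin 2) ℂ),
        K - k 0 ≤ e ∧ D.IsHomogeneous e ∧ MonoS (s 0) D ∧
        IsSigma (s 0) (K - 1) Q p ∧ ∀ i, D ∣ p i } := by
  have hL1 : 1 < L := by omega
  have hs0 : 0 < s 0 := hs 0 (by omega)
  have hk0 : 1 ≤ k 0 := hk 0 (by omega)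
  have hk1 : 1 ≤ k 1 := hk 1 hL1
  set A := ∑ i ∈ Finset.Ico 1 L, Sp s i * (k i - 1) with hA
  have hKA : K = k 0 + A := by
    rw [hK, hA]; congr 1; exact Finset.sum_congr rfl (fun i _ => Nat.mul_comm _ _)
  have hs0A : s 0 ∣ A :=
    Finset.dvd_sum (fun i hi => Dvd.dvd.mul_right (s0_dvd_Sp s (Finset.mem_Ico.mp hi).1) _)
  obtain ⟨A', hA'⟩ := hs0A
  ext Q
  simp only [Fset, Set.mem_setOf_eq]
  constructor
  · rintro ⟨Qf, hQeq, hQprop⟩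
    set E' := ∏ i ∈ Finset.Ico 1 L, Qf i with hE'
    have hE'h : E'.IsHomogeneous A :=
      MvPolynomial.IsHomogeneous.prod _ _ _ (fun i hi => (hQprop i (Finset.mem_Ico.mp hi).2).1)
    have hE'm : MonoS (s 0) E' :=
      MonoS.prod _ _ (fun i hi =>
        ((hQprop i (Finset.mem_Ico.mp hi).2).2).of_dvd (s0_dvd_Sp s (Finset.mem_Ico.mp hi).1))
    have hQ0h : (Qf 0).IsHomogeneous (k 0 - 1) := by
      have h1 := (hQprop 0 (by omega)).1
      rwa [Sp_zero, one_mul] at h1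
    have hsplitQ : Q = Qf 0 * E' := by
      rw [hQeq, hE', ← Finset.prod_range_mul_prod_Ico Qf (by omega : 1 ≤ L),
        Finset.prod_range_one]
    refine ⟨⟨fun i => if i = 0 then Qf 0 * Qf 1 else Qf (i + 1), ?_, ?_⟩,
      E', A, fun i => sect (s 0) (k 0 - 1) (i : ℕ) (Qf 0) * E', by omega, hE'h, hE'm,
      ⟨?_, ?_⟩, fun i => dvd_mul_left E' _⟩
    · -- product for Fset (L-1)
      rw [hQeq, ← Finset.prod_range_mul_prod_Ico Qf (by omega : 2 ≤ L),
        ← Finset.prod_range_mul_prod_Ico _ (by omega : 1 ≤ L - 1),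
        Finset.prod_range_one, Finset.prod_range_succ, Finset.prod_range_one]
      simp only [if_pos rfl]
      congr 1
      have h1 : ∏ j ∈ Finset.Ico 2 L, Qf j = ∏ i ∈ Finset.Ico 1 (L - 1), Qf (i + 1) := by
        rw [Finset.prod_Ico_eq_prod_range, Finset.prod_Ico_eq_prod_range,
          show L - 1 - 1 = L - 2 by omega]
        exact Finset.prod_congr rfl (fun i _ => by congr 1; omega)
      rw [h1]
      exact (Finset.prod_congr rfl (fun i hi => by
        rw [if_neg (by have := (Finset.mem_Ico.mp hi).1; omega)])).symm
    · -- layer properties for Fset (L-1)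
      intro i hiL
      by_cases hi0 : i = 0
      · subst hi0
        simp only [if_pos rfl]
        constructor
        · have hnum : Sp s' 0 * (k' 0 - 1) = (k 0 - 1) + Sp s 1 * (k 1 - 1) := by
            rw [Sp_zero, Sp_one, hk'0, one_mul]
            omega
          rw [hnum]
          exact hQ0h.mul (hQprop 1 hL1).1
        · rw [Sp_zero]
          exact MonoS.one _
      · have hi1 : 1 ≤ i := by omega
        simp only [if_neg hi0]
        rw [Sp'_eq hs'0 hs' hi1, hk' i hi1]
        exact hQprop (i + 1) (by omega)
    · -- IsSigma components
      intro i
      dsimp only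
      by_cases hik : (i : ℕ) ≤ k 0 - 1
      · refine ⟨?_, (sect_monoS hs0 i.isLt hQ0h).mul hE'm, ?_⟩
        · have h1 := (sect_homog hs0 i.isLt hQ0h).mul hE'h
          have h2 : s 0 * ((K - 1 - (i : ℕ)) / s 0)
              = s 0 * ((k 0 - 1 - (i : ℕ)) / s 0) + A := by
            have h3 : K - 1 - (i : ℕ) = (k 0 - 1 - (i : ℕ)) + s 0 * A' := by omega
            rw [h3, Nat.add_mul_div_left _ _ hs0, Nat.mul_add, ← hA']
          rw [h2]
          exact h1
        · intro hKi
          exact absurd hKi (by omega)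
      · have hz : sect (s 0) (k 0 - 1) (i : ℕ) (Qf 0) = 0 :=
          sect_eq_zero i.isLt hQ0h (by omega)
        rw [hz, zero_mul]
        exact ⟨isHomogeneous_zero _ _ _, MonoS.zero _, fun _ => rfl⟩
    · -- IsSigma sum equation
      rw [hsplitQ]
      conv_lhs => rw [← sect_sum hs0 hQ0h]
      rw [Finset.sum_mul]
      apply Finset.sum_congr rfl
      intro i _
      dsimp only
      by_cases hik : (i : ℕ) ≤ k 0 - 1
      · have hmod : (k 0 - 1 - (i : ℕ)) % s 0 = (K - 1 - (i : ℕ)) % s 0 := by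
          have h3 : K - 1 - (i : ℕ) = (k 0 - 1 - (i : ℕ)) + s 0 * A' := by omega
          rw [h3, Nat.add_mul_mod_self_left]
        rw [hmod]
        ring
      · rw [sect_eq_zero i.isLt hQ0h (by omega)]
        ring
  · rintro ⟨⟨Rf, hQR, hRprop⟩, D, e, p, he, hD, hDm, ⟨hsig1, hsig2⟩, hdvd⟩
    by_cases hQ0 : Q = 0
    · refine ⟨fun j => if j = 0 then 0 else X 0 ^ (Sp s j * (k j - 1)), ?_, ?_⟩
      · rw [hQ0]
        exact (Finset.prod_eq_zero (Finset.mem_range.mpr (by omega : 0 < L))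
          (by simp)).symm
      · intro j hj
        by_cases hj0 : j = 0
        · subst hj0
          simp only [if_pos rfl]
          exact ⟨isHomogeneous_zero _ _ _, MonoS.zero _⟩
        · simp only [if_neg hj0]
          refine ⟨isHomogeneous_X_pow _ _, ?_⟩
          intro m hm
          have h2 : (X (0 : Fin 2) ^ (Sp s j * (k j - 1)) : MvPolynomial (Fin 2) ℂ).support
              ⊆ {Finsupp.single 0 (Sp s j * (k j - 1))} := by
            rw [X_pow_eq_monomial]
            exact MvPolynomial.support_monomial_subset
          have hm2 := Finset.mem_singleton.mp (h2 hm)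
          subst hm2
          constructor
          · simpa using Dvd.dvd.mul_right (dvd_refl (Sp s j)) (k j - 1)
          · simpa using dvd_zero (Sp s j)
    · -- main (nonzero) case
      set E := ∏ i ∈ Finset.Ico 1 (L - 1), Rf i with hE
      set dE := ∑ i ∈ Finset.Ico 1 (L - 1), Sp s' i * (k' i - 1) with hdE
      have hEh : E.IsHomogeneous dE :=
        MvPolynomial.IsHomogeneous.prod _ _ _
          (fun i hi => (hRprop i (Finset.mem_Ico.mp hi).2).1)
      have hEm : MonoS (s 0) E := by
        apply MonoS.prod
        intro i hi
        have hi1 : 1 ≤ i := (Finset.mem_Ico.mp hi).1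
        apply ((hRprop i (Finset.mem_Ico.mp hi).2).2).of_dvd
        rw [Sp'_eq hs'0 hs' hi1]
        exact s0_dvd_Sp s (by omega)
      set d0 := k 0 - 1 + s 0 * (k 1 - 1) with hd0
      have hR0h : (Rf 0).IsHomogeneous d0 := by
        have h1 := (hRprop 0 (by omega)).1
        have hnum : Sp s' 0 * (k' 0 - 1) = d0 := by
          rw [Sp_zero, one_mul, hk'0, hd0]
          omega
        rwa [hnum] at h1
      have hQRE : Q = Rf 0 * E := by
        rw [hQR, hE, ← Finset.prod_range_mul_prod_Ico Rf (by omega : 1 ≤ L - 1),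
          Finset.prod_range_one]
      have hR00 : Rf 0 ≠ 0 := fun h => hQ0 (by rw [hQRE, h, zero_mul])
      have hE0 : E ≠ 0 := fun h => hQ0 (by rw [hQRE, h, mul_zero])
      -- K in terms of d0 and dE
      have h_dE2 : dE = ∑ j ∈ Finset.Ico 2 L, Sp s j * (k j - 1) := by
        rw [hdE, Finset.sum_Ico_eq_sum_range, Finset.sum_Ico_eq_sum_range,
          show L - 1 - 1 = L - 2 by omega]
        apply Finset.sum_congr rfl
        intro i _
        rw [Sp'_eq hs'0 hs' (by omega : 1 ≤ 1 + i), hk' (1 + i) (by omega),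
          show 1 + i + 1 = 2 + i from by omega]
      have hA2 : A = s 0 * (k 1 - 1) + dE := by
        rw [hA, Finset.sum_eq_sum_Ico_succ_bot (by omega : 1 < L), Sp_one, h_dE2]
      have hKd : K = d0 + 1 + dE := by omega
      have hs0dE : s 0 ∣ dE := by
        rw [h_dE2]
        exact Finset.dvd_sum (fun j hj =>
          Dvd.dvd.mul_right (s0_dvd_Sp s (by have := (Finset.mem_Ico.mp hj).1; omega)) _)
      obtain ⟨dE', hdE'⟩ := hs0dE
      -- reconstruct Rf 0 from its sections and identify p i
      have hrecon : Rf 0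
          = ∑ i : Fin (s 0), X 0 ^ (i : ℕ) * X 1 ^ ((d0 - (i : ℕ)) % s 0)
              * sect (s 0) d0 (i : ℕ) (Rf 0) := (sect_sum hs0 hR0h).symm
      have hQsum2 : Q = ∑ i : Fin (s 0), X 0 ^ (i : ℕ) * X 1 ^ ((K - 1 - (i : ℕ)) % s 0)
          * (sect (s 0) d0 (i : ℕ) (Rf 0) * E) := by
        rw [hQRE]
        conv_lhs => rw [hrecon]
        rw [Finset.sum_mul]
        apply Finset.sum_congr rfl
        intro i _
        by_cases hik : (i : ℕ) ≤ d0
        · have hmod : (d0 - (i : ℕ)) % s 0 = (K - 1 - (i : ℕ)) % s 0 := by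
            have h3 : K - 1 - (i : ℕ) = (d0 - (i : ℕ)) + s 0 * dE' := by omega
            rw [h3, Nat.add_mul_mod_self_left]
          rw [hmod]
          ring
        · rw [sect_eq_zero i.isLt hR0h (by omega)]
          ring
      have hpq : ∀ i : Fin (s 0), p i = sect (s 0) d0 (i : ℕ) (Rf 0) * E := by
        have hzero : ∑ i : Fin (s 0), X 0 ^ (i : ℕ) * X 1 ^ ((K - 1 - (i : ℕ)) % s 0)
            * (p i - sect (s 0) d0 (i : ℕ) (Rf 0) * E) = 0 := by
          have hrw : ∀ i : Fin (s 0), X 0 ^ (i : ℕ) * X 1 ^ ((K - 1 - (i : ℕ)) % s 0)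
              * (p i - sect (s 0) d0 (i : ℕ) (Rf 0) * E)
              = X 0 ^ (i : ℕ) * X 1 ^ ((K - 1 - (i : ℕ)) % s 0) * p i
                - X 0 ^ (i : ℕ) * X 1 ^ ((K - 1 - (i : ℕ)) % s 0)
                  * (sect (s 0) d0 (i : ℕ) (Rf 0) * E) := fun i => by ring
          rw [Finset.sum_congr rfl (fun i _ => hrw i), Finset.sum_sub_distrib,
            ← hsig2, ← hQsum2, sub_self]
        intro i
        have hres := shift_sum_eq_zero hs0 (fun i =>
          ((hsig1 i).2.1).sub ((sect_monoS hs0 i.isLt hR0h).mul hEm)) hzero i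
        exact sub_eq_zero.mp hres
      obtain ⟨i0, hpi0⟩ : ∃ i0, p i0 ≠ 0 := by
        by_contra hall
        push_neg at hall
        apply hQ0
        rw [hsig2]
        exact Finset.sum_eq_zero (fun i _ => by rw [hall i, mul_zero])
      have hD0 : D ≠ 0 := by
        intro h
        apply hpi0
        have h2 := hdvd i0
        rw [h] at h2
        exact zero_dvd_iff.mp h2
      have hqi0 : sect (s 0) d0 (i0 : ℕ) (Rf 0) ≠ 0 := fun h => hpi0 (by
        rw [hpq i0, h, zero_mul])
      -- extract the common divisor c
      obtain ⟨c, hch, hcm, hc0, hcdvd⟩ :=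
        key_extract (n := k 1 - 1) hs0 hD hDm hD0 hEh hEm hE0 (by omega)
          (fun i : Fin (s 0) => sect (s 0) d0 (i : ℕ) (Rf 0))
          (fun i => s 0 * ((d0 - (i : ℕ)) / s 0))
          (fun i => sect_homog hs0 i.isLt hR0h)
          (fun i => sect_monoS hs0 i.isLt hR0h)
          hqi0
          (fun i => by rw [← hpq i]; exact hdvd i)
      -- write each section as c * t i with controlled homogeneity
      have ht : ∀ i : Fin (s 0), ∃ t : MvPolynomial (Fin 2) ℂ,
          sect (s 0) d0 (i : ℕ) (Rf 0) = c * t ∧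
          (X 0 ^ (i : ℕ) * X 1 ^ ((d0 - (i : ℕ)) % s 0) * t).IsHomogeneous (k 0 - 1) := by
        intro i
        obtain ⟨t, hti⟩ := hcdvd i
        by_cases hqz : sect (s 0) d0 (i : ℕ) (Rf 0) = 0
        · refine ⟨0, by rw [hqz, mul_zero], by rw [mul_zero]; exact isHomogeneous_zero _ _ _⟩
        · have hile : (i : ℕ) ≤ d0 := by
            by_contra hgt
            exact hqz (sect_eq_zero i.isLt hR0h (by omega))
          obtain ⟨dc2, dt, hc2, htth, hsum3⟩ :=
            isHomog_of_mul (sect_homog hs0 i.isLt hR0h) hqz hti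
          have hdc2 : dc2 = s 0 * (k 1 - 1) := hc2.inj_right hch hc0
          refine ⟨t, hti, ?_⟩
          have hhh := ((isHomogeneous_X_pow (R := ℂ) (0 : Fin 2) (i : ℕ)).mul
            (isHomogeneous_X_pow (R := ℂ) (1 : Fin 2) ((d0 - (i : ℕ)) % s 0))).mul htth
          have hnum2 : ((i : ℕ) + (d0 - (i : ℕ)) % s 0) + dt = k 0 - 1 := by
            have hmd := Nat.mod_add_div (d0 - (i : ℕ)) (s 0)
            omega
          exact hnum2 ▸ hhh
      choose t htq hth using ht
      set Q0 := ∑ i : Fin (s 0), X 0 ^ (i : ℕ) * X 1 ^ ((d0 - (i : ℕ)) % s 0) * t i with hQ0def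
      have hQ0homog : Q0.IsHomogeneous (k 0 - 1) :=
        MvPolynomial.IsHomogeneous.sum _ _ _ (fun i _ => hth i)
      have hcQ0 : c * Q0 = Rf 0 := by
        rw [hQ0def, Finset.mul_sum]
        conv_rhs => rw [hrecon]
        apply Finset.sum_congr rfl
        intro i _
        rw [htq i]
        ring
      refine ⟨fun j => if j = 0 then Q0 else if j = 1 then c else Rf (j - 1), ?_, ?_⟩
      · rw [← Finset.prod_range_mul_prod_Ico _ (by omega : 2 ≤ L),
          Finset.prod_range_succ, Finset.prod_range_one]
        simp only [reduceIte]
        have h1 : ∏ j ∈ Finset.Ico 2 L,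
            (if j = 0 then Q0 else if j = 1 then c else Rf (j - 1))
            = ∏ j ∈ Finset.Ico 2 L, Rf (j - 1) := by
          apply Finset.prod_congr rfl
          intro j hj
          have := (Finset.mem_Ico.mp hj).1
          rw [if_neg (by omega), if_neg (by omega)]
        rw [h1, prod_Ico_shift Rf L hL, ← hE, hQRE, ← hcQ0,
          if_neg (by norm_num : ¬(1 : ℕ) = 0)]
        ring
      · intro j hj
        by_cases hj0 : j = 0
        · subst hj0
          simp only [reduceIte]
          rw [Sp_zero, one_mul]
          exact ⟨hQ0homog, MonoS.one _⟩
        · by_cases hj1 : j = 1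
          · subst hj1
            simp only [reduceIte]
            rw [Sp_one]
            exact ⟨hch, hcm⟩
          · simp only [if_neg hj0, if_neg hj1]
            obtain ⟨hh, hmng⟩ := hRprop (j - 1) (by omega)
            rw [Sp'_eq hs'0 hs' (by omega : 1 ≤ j - 1), hk' (j - 1) (by omega)] at hh
            rw [Sp'_eq hs'0 hs' (by omega : 1 ≤ j - 1)] at hmng
            rw [Nat.sub_add_cancel (by omega : 1 ≤ j)] at hh hmng
            exact ⟨hh, hmng⟩
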